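/- If σ = {λ_1, ..., λ_n} is the list of real eigenvalues (with multiplicity) of an entrywise nonnegative real n×n matrix whose characteristic polynomial splits over ℝ, then max_i |λ_i| is itself an element of σ. -/

import Mathlib

open Polynomial Matrix

variable {N : ℕ}

lemma myEvalCharpoly (B : Matrix (Fin N) (Fin N) ℂ) (t : ℂ) :
    B.charpoly.eval t = (t • (1 : Matrix (Fin N) (Fin N) ℂ) - B).det := by
  rw [Matrix.charpoly, _root_.eval_det, matPolyEquiv_charmatrix]
  congr 2
  simp [smul_eq_diagonal_mul]

lemma mySwap {α : Type*} [CommMonoid α] (s t : Multiset ℂ) (f : ℂ → ℂ → α) :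
    (s.map fun a => (t.map fun b => f a b).prod).prod
      = (t.map fun b => (s.map fun a => f a b).prod).prod := by
  induction s using Multiset.induction_on with
  | empty => simp
  | cons a s ih => simp [ih, Multiset.prod_map_mul]

lemma negProd (s : Multiset ℂ) (f : ℂ → ℂ) :
    (s.map fun x => -f x).prod = (-1) ^ Multiset.card s * (s.map f).prod := by
  induction s using Multiset.induction_on with
  | empty => simp
  | cons a s ih => simp [ih, pow_succ]; ring

lemma detAeval (A : Matrix (Fin N) (Fin N) ℂ) (s : Multiset ℂ) :
    ((aeval A) (s.map fun ν => X - C ν).prod).det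
      = (s.map fun ν => (A - ν • 1).det).prod := by
  induction s using Multiset.induction_on with
  | empty => simp
  | cons a s ih =>
    simp only [Multiset.map_cons, Multiset.prod_cons, _root_.map_mul, Matrix.det_mul, ih]
    congr 1
    simp [map_sub, Algebra.algebraMap_eq_smul_one]

lemma myCharpolyPow (A : Matrix (Fin N) (Fin N) ℂ) (σc : Multiset ℂ)
    (h : A.charpoly = (σc.map fun l => X - C l).prod) (k : ℕ) (hk : k ≠ 0) :
    (A ^ k).charpoly = ((σc.map fun l => l ^ k).map fun l => X - C l).prod := by
  have hcard : Multiset.card σc = N := by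
    have h1 := A.charpoly_natDegree_eq_dim
    rw [h, natDegree_multiset_prod_X_sub_C_eq_card] at h1
    simpa using h1
  have hp : ∀ ν : ℂ, (ν • (1 : Matrix (Fin N) (Fin N) ℂ) - A).det
      = (σc.map fun l => ν - l).prod := by
    intro ν
    rw [← myEvalCharpoly, h, ← Polynomial.coe_evalRingHom, map_multiset_prod,
      Multiset.map_map]
    simp
  apply Polynomial.funext
  intro μ
  set q : ℂ[X] := X ^ k - C μ with hq
  have hmon : q.Monic := monic_X_pow_sub_C μ hk
  have hsplit : q.Splits := IsAlgClosed.splits q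
  have hfact : q = (q.roots.map fun ν => X - C ν).prod := by
    conv_lhs => rw [hsplit.eq_prod_roots_of_monic hmon]
  have hrcard : Multiset.card q.roots = k := by
    rw [splits_iff_card_roots.mp hsplit, hq, natDegree_X_pow_sub_C]
  have hqev : ∀ l : ℂ, (q.roots.map fun ν => l - ν).prod = l ^ k - μ := by
    intro l
    have h2 := congrArg (Polynomial.eval l) hfact
    rw [← Polynomial.coe_evalRingHom, map_multiset_prod, Multiset.map_map] at h2
    simp only [Function.comp, eval_sub, eval_X, eval_C, eval_pow, coe_evalRingHom, hq] at h2
    rw [← h2]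
  have hml : μ • (1 : Matrix (Fin N) (Fin N) ℂ) - A ^ k = -(aeval A q) := by
    simp [hq, map_sub, Algebra.algebraMap_eq_smul_one, neg_sub]
  have hAdet : ∀ ν : ℂ, (A - ν • (1 : Matrix (Fin N) (Fin N) ℂ)).det
      = (-1) ^ N * (σc.map fun l => ν - l).prod := by
    intro ν
    rw [show A - ν • (1 : Matrix (Fin N) (Fin N) ℂ) = -(ν • 1 - A) from (neg_sub _ _).symm,
      Matrix.det_neg, Fintype.card_fin, hp]
  set P : ℂ := (σc.map fun l => l ^ k - μ).prod with hP
  have hLHS : Polynomial.eval μ (A ^ k).charpoly = (-1) ^ N * P := by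
    calc Polynomial.eval μ (A ^ k).charpoly
        = (μ • (1 : Matrix (Fin N) (Fin N) ℂ) - A ^ k).det := myEvalCharpoly _ _
      _ = (-1) ^ N * (aeval A q).det := by rw [hml, Matrix.det_neg]; norm_num
      _ = (-1) ^ N * (q.roots.map fun ν => (A - ν • 1).det).prod := by
          conv_lhs => rw [hfact, detAeval]
      _ = (-1) ^ N * (q.roots.map fun ν => (-1) ^ N * (σc.map fun l => ν - l).prod).prod := by
          rw [Multiset.map_congr rfl fun ν _ => hAdet ν]
      _ = (-1) ^ N * (((-1) ^ N) ^ k * (q.roots.map fun ν => (σc.map fun l => ν - l).prod).prod) := by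
          rw [Multiset.prod_map_mul]
          congr 2
          simp [hrcard]
      _ = (-1) ^ N * (((-1) ^ N) ^ k * (σc.map fun l => (q.roots.map fun ν => ν - l).prod).prod) := by
          rw [mySwap]
      _ = (-1) ^ N * (((-1) ^ N) ^ k * (σc.map fun l => (-1) ^ k * (l ^ k - μ)).prod) := by
          congr 2
          apply congrArg Multiset.prod
          apply Multiset.map_congr rfl
          intro l _
          calc (q.roots.map fun ν => ν - l).prod
              = (q.roots.map fun ν => -(l - ν)).prod := by
                apply congrArg Multiset.prod; apply Multiset.map_congr rfl; intro ν _; ring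
            _ = (-1) ^ k * (q.roots.map fun ν => l - ν).prod := by rw [negProd, hrcard]
            _ = (-1) ^ k * (l ^ k - μ) := by rw [hqev]
      _ = (-1) ^ N * (((-1) ^ N) ^ k * (((-1) ^ k) ^ N * P)) := by
          rw [Multiset.prod_map_mul]
          congr 2
          simp [hcard, hP]
      _ = (-1) ^ N * P := by
          rw [← pow_mul, ← pow_mul, mul_comm k N]
          have : ((-1 : ℂ)) ^ (N * k) * ((-1)) ^ (N * k) = 1 := by
            rw [← pow_add, ← two_mul, pow_mul]
            norm_num
          rw [← mul_assoc ((-1 : ℂ) ^ (N * k)), this, one_mul]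
  rw [hLHS, ← Polynomial.coe_evalRingHom, map_multiset_prod, Multiset.map_map, Multiset.map_map]
  simp only [Function.comp, coe_evalRingHom, eval_sub, eval_X, eval_C]
  calc ((-1 : ℂ)) ^ N * P = (σc.map fun l => -(l ^ k - μ)).prod := by rw [negProd, hcard, hP]
    _ = (σc.map fun l => μ - l ^ k).prod := by
        apply congrArg Multiset.prod; apply Multiset.map_congr rfl; intro l _; ring

lemma myTracePow (hN : N ≠ 0) (A : Matrix (Fin N) (Fin N) ℝ) (σ : Multiset ℝ)
    (h : A.charpoly = (σ.map fun l => X - C l).prod) (k : ℕ) (hk : k ≠ 0) :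
    (A ^ k).trace = (σ.map fun l => l ^ k).sum := by
  have : NeZero N := ⟨hN⟩
  have hcardσ : Multiset.card σ = N := by
    have h1 := A.charpoly_natDegree_eq_dim
    rw [h, natDegree_multiset_prod_X_sub_C_eq_card] at h1
    simpa using h1
  set f : ℝ →+* ℂ := algebraMap ℝ ℂ
  set Ac : Matrix (Fin N) (Fin N) ℂ := A.map f with hAc
  have hc : Ac.charpoly = ((σ.map f).map fun l => X - C l).prod := by
    rw [hAc, Matrix.charpoly_map, h, ← Polynomial.coe_mapRingHom, map_multiset_prod,
      Multiset.map_map, Multiset.map_map]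
    simp
  have key := myCharpolyPow Ac (σ.map f) hc k hk
  have hmapow : Ac ^ k = (A ^ k).map f := by
    rw [hAc, ← RingHom.mapMatrix_apply, ← RingHom.mapMatrix_apply, ← map_pow]
  have htrmap : ((A ^ k).map f).trace = f ((A ^ k).trace) := by
    simp [Matrix.trace, Matrix.map_apply, Matrix.diag]
  have hcoeff : (Ac ^ k).trace = (((σ.map f)).map fun l => l ^ k).sum := by
    rw [Matrix.trace_eq_neg_charpoly_coeff, key]
    set τ := (σ.map f).map fun l => l ^ k with hτ
    have hcardτ : Multiset.card τ = N := by simp [hτ, hcardσ]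
    have hnd : ((τ.map fun l => X - C l).prod).natDegree = N := by
      rw [natDegree_multiset_prod_X_sub_C_eq_card, hcardτ]
    have hnext := multiset_prod_X_sub_C_nextCoeff τ
    rw [nextCoeff_of_natDegree_pos (by rw [hnd]; omega)] at hnext
    rw [hnd] at hnext
    rw [Fintype.card_fin, hnext, neg_neg]
  have : f ((A ^ k).trace) = f ((σ.map fun l => l ^ k).sum) := by
    rw [← htrmap, ← hmapow, hcoeff, map_multiset_sum, Multiset.map_map, Multiset.map_map]
    simp
  exact Complex.ofReal_injective this

lemma powEntryNonneg (A : Matrix (Fin N) (Fin N) ℝ) (hA : ∀ i j, 0 ≤ A i j) (k : ℕ) :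
    ∀ i j, 0 ≤ (A ^ k) i j := by
  induction k with
  | zero =>
    intro i j
    simp only [pow_zero, Matrix.one_apply]
    split <;> norm_num
  | succ k ih =>
    intro i j
    rw [pow_succ, Matrix.mul_apply]
    exact Finset.sum_nonneg fun l _ => mul_nonneg (ih i l) (hA l j)

theorem spectral_radius_mem_spectrum_aux (n : ℕ) (hn : 1 ≤ n) (A : Matrix (Fin n) (Fin n) ℝ)
    (hA : ∀ i j, 0 ≤ A i j) (σ : Multiset ℝ)
    (hσ : A.charpoly = (σ.map fun l => X - C l).prod) :
    ∃ l ∈ σ, ∀ m ∈ σ, |m| ≤ l := by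
  classical
  have hn0 : n ≠ 0 := by omega
  have hcardσ : Multiset.card σ = n := by
    have h1 := A.charpoly_natDegree_eq_dim
    rw [hσ, natDegree_multiset_prod_X_sub_C_eq_card] at h1
    simpa using h1
  have hσne : σ ≠ 0 := by
    intro h0; rw [h0] at hcardσ; simp at hcardσ; omega
  obtain ⟨l0, hl0m, hmax⟩ := Finset.exists_max_image σ.toFinset abs
    (Multiset.toFinset_nonempty.mpr hσne)
  rw [Multiset.mem_toFinset] at hl0m
  have hmax' : ∀ m ∈ σ, |m| ≤ |l0| := fun m hm => hmax m (Multiset.mem_toFinset.mpr hm)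
  by_cases h0 : 0 ≤ l0
  · exact ⟨l0, hl0m, fun m hm => (hmax' m hm).trans_eq (abs_of_nonneg h0)⟩
  push_neg at h0
  set ρ : ℝ := -l0 with hρdef
  have hρpos : 0 < ρ := by simp [hρdef]; linarith
  have habsl0 : |l0| = ρ := abs_of_neg h0
  by_cases hρσ : ρ ∈ σ
  · exact ⟨ρ, hρσ, fun m hm => (hmax' m hm).trans_eq habsl0⟩
  exfalso
  -- split off the -ρ's
  set c : ℕ := σ.count (-ρ) with hc
  set σ' : Multiset ℝ := σ.filter (fun m => ¬ m = -ρ) with hσ'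
  have hsplitσ : σ = Multiset.replicate c (-ρ) + σ' := by
    rw [hσ', hc, ← Multiset.filter_eq' σ (-ρ)]
    exact (Multiset.filter_add_not (fun m => m = -ρ) σ).symm
  have hcpos : 1 ≤ c := by
    rw [hc]
    have : l0 ∈ σ := hl0m
    rw [show -ρ = l0 by simp [hρdef]]
    exact Multiset.count_pos.mpr hl0m
  have hmemσ' : ∀ m ∈ σ', m ∈ σ ∧ m ≠ -ρ := by
    intro m hm
    rw [hσ', Multiset.mem_filter] at hm
    exact ⟨hm.1, hm.2⟩
  -- uniform bound β < ρ on σ'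
  obtain ⟨β, hβ0, hβρ, hβ⟩ : ∃ β : ℝ, 0 ≤ β ∧ β < ρ ∧ ∀ m ∈ σ', |m| ≤ β := by
    by_cases hσ'0 : σ' = 0
    · exact ⟨0, le_refl _, hρpos, by simp [hσ'0]⟩
    · obtain ⟨m0, hm0, hm0max⟩ := Finset.exists_max_image σ'.toFinset abs
        (Multiset.toFinset_nonempty.mpr hσ'0)
      rw [Multiset.mem_toFinset] at hm0
      obtain ⟨hm0σ, hm0ne⟩ := hmemσ' m0 hm0
      refine ⟨|m0|, abs_nonneg _, ?_, fun m hm => hm0max m (Multiset.mem_toFinset.mpr hm)⟩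
      rcases lt_or_eq_of_le ((hmax' m0 hm0σ).trans_eq habsl0) with h | h
      · exact h
      · exfalso
        rcases abs_eq (le_of_lt hρpos) |>.mp h with h' | h'
        · exact hρσ (h' ▸ hm0σ)
        · exact hm0ne h'
  -- choose odd k with (β/ρ)^k < c/n
  have hr1 : β / ρ < 1 := (div_lt_one hρpos).mpr hβρ
  have hr0 : 0 ≤ β / ρ := div_nonneg hβ0 (le_of_lt hρpos)
  have hcn : 0 < (c : ℝ) / n := by
    apply div_pos <;> [exact_mod_cast hcpos; exact_mod_cast Nat.pos_of_ne_zero hn0]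
  obtain ⟨k0, hk0⟩ := exists_pow_lt_of_lt_one hcn hr1
  set k : ℕ := if Odd k0 then k0 else k0 + 1 with hk
  have hkodd : Odd k := by
    rw [hk]; split
    · assumption
    · rename_i h; rw [Nat.not_odd_iff_even] at h; exact Even.add_one h
  have hkk0 : k0 ≤ k := by rw [hk]; split <;> omega
  have hklt : (β / ρ) ^ k < (c : ℝ) / n :=
    lt_of_le_of_lt (pow_le_pow_of_le_one hr0 (le_of_lt hr1) hkk0) hk0
  have hkne : k ≠ 0 := by
    intro h
    rw [h, pow_zero] at hklt
    have : (c : ℝ) / n ≤ 1 := by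
      apply div_le_one_of_le₀
      · exact_mod_cast (hcardσ ▸ (hsplitσ ▸ by simp : c ≤ Multiset.card σ))
      · positivity
    linarith
  -- trace identity and bounds
  have htr := myTracePow hn0 A σ hσ k hkne
  have htrnn : 0 ≤ (A ^ k).trace := by
    apply Finset.sum_nonneg
    intro i _
    exact powEntryNonneg A hA k i i
  have hcardσ' : Multiset.card σ' ≤ n := by
    have := congrArg Multiset.card hsplitσ
    simp [hcardσ] at this
    omega
  have hsum' : (σ'.map fun l => l ^ k).sum ≤ (Multiset.card σ' : ℝ) * β ^ k := by
    have hb : ∀ x ∈ (σ'.map fun l => l ^ k), x ≤ β ^ k := by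
      intro x hx
      obtain ⟨m, hm, rfl⟩ := Multiset.mem_map.mp hx
      calc m ^ k ≤ |m ^ k| := le_abs_self _
        _ = |m| ^ k := abs_pow m k
        _ ≤ β ^ k := pow_le_pow_left₀ (abs_nonneg m) (hβ m hm) k
    have h1 := Multiset.sum_le_card_nsmul (σ'.map fun l => l ^ k) (β ^ k) hb
    simpa [nsmul_eq_mul] using h1
  have hdecomp : (σ.map fun l => l ^ k).sum
      = (c : ℝ) * (-ρ) ^ k + (σ'.map fun l => l ^ k).sum := by
    rw [hsplitσ, Multiset.map_add, Multiset.sum_add, Multiset.map_replicate,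
      Multiset.sum_replicate, nsmul_eq_mul]
  have hnegpow : (-ρ) ^ k = -(ρ ^ k) := Odd.neg_pow hkodd ρ
  have hlow : 0 ≤ -( (c : ℝ) * ρ ^ k) + (n : ℝ) * β ^ k := by
    have h2 : (Multiset.card σ' : ℝ) * β ^ k ≤ (n : ℝ) * β ^ k := by
      apply mul_le_mul_of_nonneg_right _ (pow_nonneg hβ0 k)
      exact_mod_cast hcardσ'
    have h3 : 0 ≤ (σ.map fun l => l ^ k).sum := htr ▸ htrnn
    rw [hdecomp, hnegpow] at h3
    nlinarith
  have hup : (n : ℝ) * β ^ k < (c : ℝ) * ρ ^ k := by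
    rw [div_pow, div_lt_div_iff₀ (pow_pos hρpos k) (by exact_mod_cast Nat.pos_of_ne_zero hn0)] at hklt
    linarith
  linarith


/-- Perron–Frobenius consequence: if the characteristic polynomial of an entrywise nonnegative
matrix splits over `ℝ` with roots `σ`, then `max |λ_i|` is itself an element of `σ`. -/
theorem spectral_radius_mem_spectrum (n : ℕ) (hn : 1 ≤ n) (A : Matrix (Fin n) (Fin n) ℝ)
    (hA : ∀ i j, 0 ≤ A i j) (σ : Multiset ℝ)
    (hσ : A.charpoly = (σ.map fun l => X - C l).prod) :
    ∃ l ∈ σ, ∀ m ∈ σ, |m| ≤ l := by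
  exact spectral_radius_mem_spectrum_aux n hn A hA σ hσ
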